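/- Let $x_1 < \dots < x_n$ with $x_1 \geq 0$, probabilities $q_k \in (0,1)$ summing to 1, $\lambda > 0$, and let $x^*$ solve $x^* = \lambda \sum_k \frac{q_k x_k}{\lambda + x^* - x_k}$ with $x^* > x_n - \lambda$. Define $p_k = \frac{\lambda q_k}{\lambda + x^* - x_k}$. Then the distribution $p$ strictly first-order stochastically dominates $q$ whenever $n \geq 2$: for every $m \in \{1, \dots, n-1\}$, $\sum_{k > m} p_k > \sum_{k > m} q_k$. -/
import Mathlib


/-- The steady-state distribution strictly first-order stochastically dominates
the redraw distribution. -/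
theorem stmt_18 (n : ℕ) (hn : 2 ≤ n) (x q : Fin n → ℝ)
    (hx : StrictMono x) (hx0 : 0 ≤ x ⟨0, by omega⟩)
    (hq : ∀ k, q k ∈ Set.Ioo (0 : ℝ) 1) (hqsum : ∑ k, q k = 1)
    (lam : ℝ) (hlam : 0 < lam) (xs : ℝ)
    (hgt : xs > x ⟨n - 1, by omega⟩ - lam)
    (heq : xs = lam * ∑ k, q k * x k / (lam + xs - x k))
    (p : Fin n → ℝ) (hp : ∀ k, p k = lam * q k / (lam + xs - x k)) :
    ∀ m : ℕ, 1 ≤ m → m ≤ n - 1 →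
      ∑ k ∈ Finset.univ.filter (fun k : Fin n => m ≤ (k : ℕ)), p k >
      ∑ k ∈ Finset.univ.filter (fun k : Fin n => m ≤ (k : ℕ)), q k := by
  intro m hm1 hm2
  have hxtop : ∀ k : Fin n, x k ≤ x ⟨n - 1, by omega⟩ := by
    intro k
    exact hx.monotone (by simp [Fin.le_def]; omega)
  have hdpos : ∀ k : Fin n, 0 < lam + xs - x k := by
    intro k; have := hxtop k; linarith
  have hls : 0 < lam + xs := by
    have h1 := hdpos ⟨0, by omega⟩
    have h2 := hx0
    linarith
  -- sum of p equals 1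
  have hterm : ∀ k : Fin n, q k * x k / (lam + xs - x k)
      = (lam + xs) * (q k / (lam + xs - x k)) - q k := by
    intro k
    have h := (hdpos k).ne'
    field_simp
    ring
  have hSsum : ∑ k, q k * x k / (lam + xs - x k)
      = (lam + xs) * (∑ k, q k / (lam + xs - x k)) - 1 := by
    rw [Finset.mul_sum]
    rw [← hqsum, ← Finset.sum_sub_distrib]
    exact Finset.sum_congr rfl fun k _ => hterm k
  set S : ℝ := ∑ k, q k / (lam + xs - x k) with hS
  have hxeq : xs = lam * ((lam + xs) * S - 1) := by conv_lhs => rw [heq, hSsum]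
  have hlamS : lam * S = 1 := by
    have h1 : (lam + xs) * (lam * S) = (lam + xs) * 1 := by ring_nf; nlinarith [hxeq]
    exact mul_left_cancel₀ (ne_of_gt hls) h1
  have hpsum : ∑ k, p k = 1 := by
    have : ∑ k, p k = lam * S := by
      rw [hS, Finset.mul_sum]
      exact Finset.sum_congr rfl fun k _ => by rw [hp k, mul_div_assoc]
    rw [this, hlamS]
  set F := Finset.univ.filter (fun k : Fin n => m ≤ (k : ℕ)) with hF
  have hsplit_p : ∑ k ∈ F, p k + ∑ k ∈ Finset.univ.filter (fun k : Fin n => ¬ m ≤ (k : ℕ)), p k = 1 := by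
    rw [Finset.sum_filter_add_sum_filter_not]; exact hpsum
  have hsplit_q : ∑ k ∈ F, q k + ∑ k ∈ Finset.univ.filter (fun k : Fin n => ¬ m ≤ (k : ℕ)), q k = 1 := by
    rw [Finset.sum_filter_add_sum_filter_not]; exact hqsum
  by_cases hc : ∀ k : Fin n, (k : ℕ) < m → x k < xs
  · -- all head entries are below xs: head of p is strictly smaller
    have hne : (Finset.univ.filter (fun k : Fin n => ¬ m ≤ (k : ℕ))).Nonempty := by
      refine ⟨⟨0, by omega⟩, ?_⟩
      simp
      omega
    have hlt : ∑ k ∈ Finset.univ.filter (fun k : Fin n => ¬ m ≤ (k : ℕ)), p k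
        < ∑ k ∈ Finset.univ.filter (fun k : Fin n => ¬ m ≤ (k : ℕ)), q k := by
      refine Finset.sum_lt_sum_of_nonempty hne ?_
      intro k hk
      simp only [Finset.mem_filter] at hk
      have hxk : x k < xs := hc k (by omega)
      rw [hp k, div_lt_iff₀ (hdpos k)]
      nlinarith [(hq k).1]
    linarith
  · push_neg at hc
    obtain ⟨k0, hk0m, hk0x⟩ := hc
    have hne : F.Nonempty := by
      refine ⟨⟨n - 1, by omega⟩, ?_⟩
      simp [hF]
      omega
    refine Finset.sum_lt_sum_of_nonempty hne ?_
    intro k hk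
    simp only [hF, Finset.mem_filter] at hk
    have hkx : xs < x k := lt_of_le_of_lt hk0x (hx (Fin.lt_def.mpr (by omega)))
    rw [hp k, lt_div_iff₀ (hdpos k)]
    nlinarith [(hq k).1]
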